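/- Let β, κ, γ, m > 0 and for ω > 0 let α(ω) = (β/κ)^{1/4}·(ω² − i(γ/β)ω)^{1/4} ∈ ℂ (principal fourth root z^{1/4} = exp((1/4)·Log z)), and define Q̃₁(ω) = 1 + (2κ/(m·ω²))·α(ω)³·tan(α(ω)). Then there exist ω₀ > 0 and c' > 0 such that cos(α(ω)) ≠ 0 and |Q̃₁(ω)| ≥ c' for all ω ≥ ω₀. -/

import Mathlib

/-- The characteristic wavenumber `α(ω) = (β/κ)^{1/4}·(ω² − i(γ/β)ω)^{1/4}`, where
`z^{1/4} = exp((1/4)·Log z)` is the principal fourth root. -/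
noncomputable def alphaWN (β κ γ ω : ℝ) : ℂ :=
  ((β / κ) ^ ((1:ℝ)/4) : ℝ) *
    Complex.exp ((1/4 : ℂ) * Complex.log ((ω:ℂ) ^ 2 - Complex.I * ((γ:ℂ) / (β:ℂ)) * (ω:ℂ)))

open Real Complex


lemma tan_re_im (z : ℂ) :
    (Complex.tan z).re = Real.sin z.re * Real.cos z.re / (Real.cos z.re ^ 2 + Real.sinh z.im ^ 2) ∧
    (Complex.tan z).im = Real.sinh z.im * Real.cosh z.im / (Real.cos z.re ^ 2 + Real.sinh z.im ^ 2) := by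
  set x := z.re; set y := z.im
  have hs : Complex.sin z = (Real.sin x * Real.cosh y : ℝ) + (Real.cos x * Real.sinh y : ℝ) * Complex.I := by
    rw [Complex.sin_eq]; push_cast; ring
  have hc : Complex.cos z = (Real.cos x * Real.cosh y : ℝ) - (Real.sin x * Real.sinh y : ℝ) * Complex.I := by
    rw [Complex.cos_eq]; push_cast; ring
  have hsre : (Complex.sin z).re = Real.sin x * Real.cosh y := by
    rw [hs]; simp only [Complex.add_re, Complex.mul_re, Complex.ofReal_re, Complex.ofReal_im,
      Complex.I_re, Complex.I_im]; ring
  have hsim : (Complex.sin z).im = Real.cos x * Real.sinh y := by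
    rw [hs]; simp only [Complex.add_im, Complex.mul_im, Complex.ofReal_re, Complex.ofReal_im,
      Complex.I_re, Complex.I_im]; ring
  have hcre : (Complex.cos z).re = Real.cos x * Real.cosh y := by
    rw [hc]; simp only [Complex.sub_re, Complex.mul_re, Complex.ofReal_re, Complex.ofReal_im,
      Complex.I_re, Complex.I_im]; ring
  have hcim : (Complex.cos z).im = -(Real.sin x * Real.sinh y) := by
    rw [hc]; simp only [Complex.sub_im, Complex.mul_im, Complex.ofReal_re, Complex.ofReal_im,
      Complex.I_re, Complex.I_im]; ring
  have h1 : Real.cosh y ^ 2 = 1 + Real.sinh y ^ 2 := by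
    nlinarith [Real.cosh_sq_sub_sinh_sq y]
  have h2 : Real.sin x ^ 2 = 1 - Real.cos x ^ 2 := by
    nlinarith [Real.sin_sq_add_cos_sq x]
  have hns : Complex.normSq (Complex.cos z) = Real.cos x ^ 2 + Real.sinh y ^ 2 := by
    rw [Complex.normSq_apply, hcre, hcim]; nlinarith
  constructor
  · rw [Complex.tan_eq_sin_div_cos, Complex.div_re, hns, hsre, hsim, hcre, hcim,
      ← add_div]
    congr 1
    linear_combination (Real.sin x * Real.cos x) * Real.cosh_sq_sub_sinh_sq y
  · rw [Complex.tan_eq_sin_div_cos, Complex.div_im, hns, hsre, hsim, hcre, hcim,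
      div_sub_div_same]
    congr 1
    linear_combination (Real.sinh y * Real.cosh y) * Real.sin_sq_add_cos_sq x


lemma core_ineq (K φ u V Y c : ℝ) (t : ℂ) (hK : 0 < K) (hY : 0 < Y)
    (htre : t.re = u) (htim : t.im = -V) (hV0 : 0 < V)
    (hV1 : Y * u^2 ≤ V)
    (hu : |u| ≤ Real.sqrt 2 / Y)
    (hc : 0 < c) (hc4 : c ≤ 1/4)
    (hc2 : c ≤ Y / (16 * K))
    (hcos : 1/2 ≤ Real.cos φ)
    (herr : K * (Real.sqrt 2 / Y) * |Real.sin φ| ≤ c/4) :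
    c/4 ≤ ‖1 + (K:ℂ) * Complex.exp ((φ:ℝ) * Complex.I) * t‖ := by
  set w : ℂ := (K:ℂ) * Complex.exp ((φ:ℝ) * Complex.I) * t with hw
  have hexp : Complex.exp ((φ:ℝ) * Complex.I) = ((Real.cos φ : ℝ):ℂ) + ((Real.sin φ : ℝ):ℂ) * Complex.I := by
    rw [Complex.exp_mul_I, Complex.ofReal_cos, Complex.ofReal_sin]
  have habsw : ‖w‖ = K * ‖t‖ := by
    rw [hw, norm_mul, norm_mul, Complex.norm_exp]
    simp [abs_of_pos hK]
  have hwim : w.im = K * (Real.sin φ * u - Real.cos φ * V) := by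
    rw [hw, hexp]
    simp only [Complex.mul_im, Complex.mul_re, Complex.add_re, Complex.add_im,
      Complex.ofReal_re, Complex.ofReal_im, Complex.I_re, Complex.I_im, htre, htim]
    ring
  by_cases hcase : K * ‖t‖ ≤ 1/2
  · have h1 : ‖(1:ℂ)‖ - ‖-w‖ ≤ ‖(1:ℂ) - -w‖ := norm_sub_norm_le _ _
    simp only [norm_one, norm_neg, sub_neg_eq_add] at h1
    rw [habsw] at h1
    linarith
  · push_neg at hcase
    have habst : ‖t‖ ≤ |u| + V := by
      have := Complex.norm_le_abs_re_add_abs_im t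
      rw [htre, htim] at this
      rw [abs_neg, abs_of_pos hV0] at this
      exact this
    have hKV : c ≤ K * V := by
      by_cases h4 : 1/4 ≤ K * V
      · linarith
      · push_neg at h4
        have hKu : 1/4 < K * |u| := by nlinarith
        have h16 : Y / (16 * K) ≤ K * (Y * u ^ 2) := by
          have h2 : (1/4 : ℝ)^2 < (K * |u|)^2 := by
            apply sq_lt_sq' <;> nlinarith
          have h3 : (K*|u|)^2 = K^2 * u^2 := by
            rw [mul_pow, _root_.sq_abs]
          rw [div_le_iff₀ (by positivity)]
          nlinarith
        calc c ≤ Y / (16*K) := hc2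
          _ ≤ K * (Y * u^2) := h16
          _ ≤ K * V := by nlinarith
    have herr' : K * (|Real.sin φ| * |u|) ≤ c/4 := by
      have : |Real.sin φ| * |u| ≤ |Real.sin φ| * (Real.sqrt 2 / Y) := by
        apply mul_le_mul_of_nonneg_left hu (abs_nonneg _)
      nlinarith [abs_nonneg (Real.sin φ), abs_nonneg u]
    have hlow : c/4 ≤ -w.im := by
      rw [hwim]
      have h5 : Real.sin φ * u ≤ |Real.sin φ| * |u| := by
        calc Real.sin φ * u ≤ |Real.sin φ * u| := le_abs_self _
          _ = |Real.sin φ| * |u| := abs_mul _ _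
      have h7 : K * (Real.sin φ * u) ≤ c/4 := by
        calc K * (Real.sin φ * u) ≤ K * (|Real.sin φ| * |u|) :=
              mul_le_mul_of_nonneg_left h5 hK.le
          _ ≤ c/4 := herr'
      have h6 : c/2 ≤ K * (Real.cos φ * V) := by nlinarith
      linarith
    calc c/4 ≤ -w.im := hlow
      _ ≤ |(1 + w).im| := by
          rw [Complex.add_im, Complex.one_im, zero_add]
          exact (neg_le_abs _)
      _ ≤ ‖1 + w‖ := Complex.abs_im_le_norm _

set_option maxHeartbeats 1000000 in
theorem geom (β κ γ m : ℝ) (hβ : 0 < β) (hκ : 0 < κ) (hγ : 0 < γ) (hm : 0 < m)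
    (a g : ℝ) (ha_def : a = (β / κ) ^ ((1:ℝ)/4)) (hg_def : g = γ/β)
    (ω : ℝ) (hω0 : 0 < ω) (hωg : g ≤ ω) :
    ∃ R θ : ℝ,
      alphaWN β κ γ ω = ((a*R : ℝ):ℂ) * Complex.exp ((θ:ℝ) * Complex.I) ∧
      Real.sqrt ω ≤ R ∧ R ≤ 2 * Real.sqrt ω ∧
      g/(8*ω) ≤ -θ ∧ -θ ≤ g/(2*ω) ∧
      g/(16*ω) ≤ -Real.sin θ ∧ -Real.sin θ ≤ g/(2*ω) ∧
      Real.sin θ < 0 := by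
  have ha : 0 < a := ha_def ▸ Real.rpow_pos_of_pos (by positivity) _
  have hg : 0 < g := by rw [hg_def]; positivity
  set z : ℂ := (ω:ℂ) ^ 2 - Complex.I * ((γ:ℂ) / (β:ℂ)) * (ω:ℂ) with hz_def
  clear_value z
  have hzeq : z = ((ω^2 : ℝ):ℂ) - ((g*ω : ℝ):ℂ) * Complex.I := by
    rw [hz_def, hg_def]; push_cast; ring
  have hz_re : z.re = ω^2 := by
    rw [hzeq]
    simp only [Complex.sub_re, Complex.mul_re, Complex.ofReal_re, Complex.ofReal_im,
      Complex.I_re, Complex.I_im]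
    ring
  have hz_im : z.im = -(g*ω) := by
    rw [hzeq]
    simp only [Complex.sub_im, Complex.mul_im, Complex.ofReal_re, Complex.ofReal_im,
      Complex.I_re, Complex.I_im]
    ring
  have hz0 : z ≠ 0 := by
    intro h; rw [h] at hz_re; simp at hz_re; nlinarith
  have habs0 : 0 < ‖z‖ := by
    simpa using hz0
  have habs_low : ω^2 ≤ ‖z‖ := by
    have := Complex.abs_re_le_norm z
    rw [hz_re, abs_of_pos (by positivity)] at this; exact this
  have habs_up : ‖z‖ ≤ 2*ω^2 := by
    have := Complex.norm_le_abs_re_add_abs_im z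
    rw [hz_re, hz_im, abs_of_pos (by positivity), abs_neg, abs_of_pos (by positivity)] at this
    nlinarith
  -- arg
  set A := -(Complex.arg z) with hA_def
  clear_value A
  have harg_neg : Complex.arg z < 0 := by
    rw [Complex.arg_neg_iff, hz_im]
    nlinarith [mul_pos hg hω0]
  have hA0 : 0 < A := by rw [hA_def]; linarith
  have hA2 : A < π/2 := by
    have h := Complex.abs_arg_lt_pi_div_two_iff.2 (Or.inl (by rw [hz_re]; positivity))
    rw [hA_def]
    exact lt_of_le_of_lt (neg_le_abs _) h
  have hsinA : Real.sin A = g*ω / ‖z‖ := by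
    rw [hA_def, Real.sin_neg, Complex.sin_arg, hz_im]
    field_simp
  have hsinA_low : g/(2*ω) ≤ Real.sin A := by
    rw [hsinA, div_le_div_iff₀ (by positivity) habs0]
    nlinarith
  have hsinA_up : Real.sin A ≤ g/ω := by
    rw [hsinA, div_le_div_iff₀ habs0 hω0]
    nlinarith
  have hA_up : A ≤ 2*g/ω := by
    have h1 : 2/π * A ≤ Real.sin A := Real.mul_le_sin hA0.le hA2.le
    have hπ : π ≤ 4 := Real.pi_le_four
    have hπ0 : 0 < π := Real.pi_pos
    have hs0 : 0 ≤ Real.sin A :=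
      Real.sin_nonneg_of_nonneg_of_le_pi hA0.le (by linarith)
    have h1' : 2*A ≤ Real.sin A * π := by
      rw [div_mul_eq_mul_div, div_le_iff₀ hπ0] at h1; linarith
    have h2 : A ≤ 2 * Real.sin A := by
      nlinarith [mul_le_mul_of_nonneg_left hπ hs0]
    calc A ≤ 2 * Real.sin A := h2
      _ ≤ 2 * (g/ω) := by linarith
      _ = 2*g/ω := by ring
  have hA_low : g/(2*ω) ≤ A := le_trans hsinA_low (Real.sin_le hA0.le)
  -- R
  set R := Real.exp ((1/4) * Real.log (‖z‖)) with hR_def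
  clear_value R
  have hσ2 : Real.sqrt ω ^ 2 = ω := Real.sq_sqrt hω0.le
  have hσ0 : 0 < Real.sqrt ω := Real.sqrt_pos.2 hω0
  have hR_low : Real.sqrt ω ≤ R := by
    rw [hR_def, ← Real.exp_log hσ0]
    apply Real.exp_le_exp.2
    rw [Real.log_sqrt hω0.le]
    have h1 : Real.log (ω^2) ≤ Real.log (‖z‖) :=
      Real.log_le_log (by positivity) habs_low
    rw [Real.log_pow] at h1
    push_cast at h1
    linarith
  have hR_up : R ≤ 2 * Real.sqrt ω := by
    have h2σ : (0:ℝ) < 2 * Real.sqrt ω := by positivity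
    rw [hR_def, ← Real.exp_log h2σ]
    apply Real.exp_le_exp.2
    rw [Real.log_mul (by norm_num) hσ0.ne', Real.log_sqrt hω0.le]
    have h1 : Real.log (‖z‖) ≤ Real.log (2*ω^2) :=
      Real.log_le_log habs0 habs_up
    rw [Real.log_mul (by norm_num) (by positivity), Real.log_pow] at h1
    push_cast at h1
    have hlog2 : 0 ≤ Real.log 2 := Real.log_nonneg (by norm_num)
    linarith
  -- θ and polar form
  set θ := Complex.arg z / 4 with hθ_def
  clear_value θ
  have hθA : -θ = A/4 := by rw [hθ_def, hA_def]; ring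
  have hs_re : ((1/4 : ℂ) * Complex.log z).re = (1/4) * Real.log (‖z‖) := by
    simp [Complex.mul_re, Complex.log_re, Complex.log_im]
    try norm_num
  have hs_im : ((1/4 : ℂ) * Complex.log z).im = θ := by
    simp [Complex.mul_im, Complex.log_re, Complex.log_im, hθ_def]
    try ring
  have hαpolar : alphaWN β κ γ ω = ((a*R : ℝ):ℂ) * Complex.exp ((θ:ℝ) * Complex.I) := by
    rw [alphaWN, ← ha_def, ← hz_def, Complex.exp_eq_exp_re_mul_sin_add_cos, hs_re, hs_im,
      ← Complex.exp_mul_I, hR_def]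
    push_cast
    ring
  refine ⟨R, θ, hαpolar, hR_low, hR_up, ?_, ?_, ?_, ?_, ?_⟩
  · rw [hθA]
    have he : g/(8*ω) = (g/(2*ω))/4 := by ring
    rw [he]; linarith [hA_low]
  · rw [hθA]
    have he : g/(2*ω) = (2*g/ω)/4 := by ring
    rw [he]; linarith [hA_up]
  · -- g/(16ω) ≤ -sin θ = sin(A/4)
    have h : Real.sin (-θ) = -Real.sin θ := Real.sin_neg θ ▸ by rw [Real.sin_neg]
    rw [← h, hθA]
    have h1 : 2/π * (A/4) ≤ Real.sin (A/4) := Real.mul_le_sin (by linarith) (by linarith)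
    have hπ : π ≤ 4 := Real.pi_le_four
    have hπ0 : 0 < π := Real.pi_pos
    have hs0 : 0 ≤ Real.sin (A/4) :=
      Real.sin_nonneg_of_nonneg_of_le_pi (by linarith) (by linarith)
    have h1' : 2*(A/4) ≤ Real.sin (A/4) * π := by
      rw [div_mul_eq_mul_div, div_le_iff₀ hπ0] at h1; linarith
    have h2 : A/8 ≤ Real.sin (A/4) := by
      nlinarith [mul_le_mul_of_nonneg_left hπ hs0]
    have h3 : g/(16*ω) ≤ A/8 := by
      have he : g/(16*ω) = (g/(2*ω))/8 := by ring
      rw [he]; linarith [hA_low]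
    linarith
  · have h : Real.sin (-θ) = -Real.sin θ := by rw [Real.sin_neg]
    rw [← h, hθA]
    calc Real.sin (A/4) ≤ A/4 := Real.sin_le (by linarith)
      _ ≤ g/(2*ω) := by
          have he : g/(2*ω) = (2*g/ω)/4 := by ring
          rw [he]; linarith [hA_up]
  · apply Real.sin_neg_of_neg_of_neg_pi_lt
    · rw [hθ_def]; linarith
    · rw [hθ_def]
      have h1 := Complex.neg_pi_lt_arg z
      have hπ0 := Real.pi_pos
      linarith

set_option maxHeartbeats 2000000 in
/-- Uniform lower bound for `Q̃₁(ω) = 1 + (2κ/(mω²))α(ω)³ tan(α(ω))`: there exist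
`ω₀, c' > 0` such that `cos(α(ω)) ≠ 0` and `|Q̃₁(ω)| ≥ c'` for all `ω ≥ ω₀`. -/
theorem Q1tilde_lower_bound (β κ γ m : ℝ) (hβ : 0 < β) (hκ : 0 < κ) (hγ : 0 < γ)
    (hm : 0 < m) :
    ∃ ω₀ > (0:ℝ), ∃ c' > (0:ℝ), ∀ ω : ℝ, ω₀ ≤ ω →
      Complex.cos (alphaWN β κ γ ω) ≠ 0 ∧
      c' ≤ ‖(1 + (2 * (κ:ℂ) / ((m:ℂ) * (ω:ℂ) ^ 2)) * (alphaWN β κ γ ω) ^ 3 *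
        Complex.tan (alphaWN β κ γ ω))‖ := by
  set a : ℝ := ((β / κ) ^ ((1:ℝ)/4) : ℝ) with ha_def
  have ha : 0 < a := Real.rpow_pos_of_pos (by positivity) _
  set g : ℝ := γ/β with hg_def
  have hg : 0 < g := by rw [hg_def]; positivity
  set k₂ : ℝ := 16*κ*a^3/m with hk2_def
  have hk₂ : 0 < k₂ := by rw [hk2_def]; positivity
  set cy : ℝ := a*g/16 with hcy_def
  have hcy : 0 < cy := by rw [hcy_def]; positivity
  set c : ℝ := min (1/4 : ℝ) (cy/(16*k₂)) with hc_def
  have hc : 0 < c := lt_min (by norm_num) (by positivity)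
  have hc14 : c ≤ 1/4 := min_le_left _ _
  have hccy : c ≤ cy/(16*k₂) := min_le_right _ _
  refine ⟨1 + 2*g + (a*g)^2 + 12*k₂*g/(cy*c), by positivity, c/4, by positivity, ?_⟩
  intro ω hω
  have herrpos : 0 < 12*k₂*g/(cy*c) := by positivity
  have hω1 : 1 ≤ ω := by nlinarith [sq_nonneg (a*g)]
  have hω2g : 2*g ≤ ω := by nlinarith [sq_nonneg (a*g)]
  have hωag : (a*g)^2 ≤ ω := by nlinarith [sq_nonneg (a*g)]
  have hωerr : 12*k₂*g/(cy*c) ≤ ω := by nlinarith [sq_nonneg (a*g)]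
  have hω0 : 0 < ω := by linarith
  have hωg : g ≤ ω := by linarith
  obtain ⟨R, θ, hαpolar, hR_low, hR_up, hθ_low, hθ_up, hsθ_low, hsθ_up, hsθ_neg⟩ :=
    geom β κ γ m hβ hκ hγ hm a g ha_def hg_def ω hω0 hωg
  set σ := Real.sqrt ω with hσ_def
  have hσ0 : 0 < σ := Real.sqrt_pos.2 hω0
  have hσ2 : σ^2 = ω := Real.sq_sqrt hω0.le
  have hσag : a*g ≤ σ := by
    rw [hσ_def, show a*g = Real.sqrt ((a*g)^2) from (Real.sqrt_sq (by positivity)).symm]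
    exact Real.sqrt_le_sqrt hωag
  have hR0 : 0 < R := lt_of_lt_of_le hσ0 hR_low
  have hθneg : θ < 0 := by nlinarith [hθ_low, hg, hω0, div_pos hg (by positivity : (0:ℝ) < 8*ω)]
  -- imaginary part of α
  have hexpθ : Complex.exp ((θ:ℝ) * Complex.I)
      = ((Real.cos θ : ℝ):ℂ) + ((Real.sin θ : ℝ):ℂ) * Complex.I := by
    rw [Complex.exp_mul_I, Complex.ofReal_cos, Complex.ofReal_sin]
  have hαim : (alphaWN β κ γ ω).im = a*R*Real.sin θ := by
    rw [hαpolar, hexpθ]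
    simp only [Complex.mul_im, Complex.add_re, Complex.add_im, Complex.mul_re,
      Complex.ofReal_re, Complex.ofReal_im, Complex.I_re, Complex.I_im]
    ring
  set Y : ℝ := a*R*(-Real.sin θ) with hY_def
  have hY0 : 0 < Y := by
    rw [hY_def]
    exact mul_pos (mul_pos ha hR0) (neg_pos.2 hsθ_neg)
  have hyv : (alphaWN β κ γ ω).im = -Y := by rw [hαim, hY_def]; ring
  have hY_low : cy/σ ≤ Y := by
    have h1 : a*σ*(g/(16*ω)) ≤ a*R*(-Real.sin θ) := by
      apply mul_le_mul ?_ hsθ_low (by positivity) (by positivity)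
      linarith only [mul_le_mul_of_nonneg_left hR_low ha.le]
    have h2 : cy/σ = a*σ*(g/(16*ω)) := by
      rw [hcy_def, ← hσ2]; field_simp
    rw [hY_def]; linarith
  have hsθ_pos : 0 ≤ -Real.sin θ := by
    have := div_pos hg (by positivity : (0:ℝ) < 16*ω)
    linarith [hsθ_low]
  have hY_up : Y ≤ a*g/σ := by
    have h1 : a*R*(-Real.sin θ) ≤ a*(2*σ)*(g/(2*ω)) := by
      apply mul_le_mul ?_ hsθ_up hsθ_pos (by positivity)
      linarith only [mul_le_mul_of_nonneg_left hR_up ha.le]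
    have h2 : a*(2*σ)*(g/(2*ω)) = a*g/σ := by
      rw [← hσ2]; field_simp
    rw [hY_def]; linarith
  have hY1 : Y ≤ 1 := by
    have : a*g/σ ≤ 1 := by rw [div_le_one hσ0]; exact hσag
    linarith
  -- cos α ≠ 0
  have hαim_ne : (alphaWN β κ γ ω).im ≠ 0 := by
    rw [hyv]; intro h; rw [neg_eq_zero] at h; exact hY0.ne' h
  have hcosne : Complex.cos (alphaWN β κ γ ω) ≠ 0 := by
    intro hcos
    obtain ⟨k, hk⟩ := Complex.cos_eq_zero_iff.1 hcos
    apply hαim_ne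
    rw [hk]
    simp
  refine ⟨hcosne, ?_⟩
  -- tan α re/im
  obtain ⟨htu, htv⟩ := tan_re_im (alphaWN β κ γ ω)
  rw [hyv] at htu htv
  rw [Real.sinh_neg, Real.cosh_neg, neg_sq] at htv
  rw [Real.sinh_neg, neg_sq] at htu
  set x : ℝ := (alphaWN β κ γ ω).re with hx_def
  set D : ℝ := Real.cos x^2 + Real.sinh Y^2 with hD_def
  have hsinhY : Y < Real.sinh Y := Real.self_lt_sinh_iff.2 hY0
  have hsinh_pos : 0 < Real.sinh Y := lt_trans hY0 hsinhY
  have hcosh1 : 1 ≤ Real.cosh Y := Real.one_le_cosh Y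
  have hcosh2 : Real.cosh Y ≤ 2 := by
    have h1 : Real.cosh Y ≤ Real.cosh 1 := by
      rw [Real.cosh_le_cosh, abs_of_pos hY0, abs_of_pos (by norm_num : (0:ℝ) < 1)]
      exact hY1
    have h2 : Real.cosh 1 < 2 := by
      rw [Real.cosh_eq]
      have h3 := Real.exp_one_lt_d9
      have h4 : Real.exp (-1) < 1 := Real.exp_lt_one_iff.2 (by norm_num)
      linarith
    linarith
  have hD0 : 0 < D := by rw [hD_def]; positivity
  set u : ℝ := Real.sin x * Real.cos x / D with hu_def
  set V : ℝ := Real.sinh Y * Real.cosh Y / D with hV_def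
  have htre : (Complex.tan (alphaWN β κ γ ω)).re = u := htu
  have htim : (Complex.tan (alphaWN β κ γ ω)).im = -V := by
    rw [htv, hV_def]; ring
  have hV0 : 0 < V := by rw [hV_def]; positivity
  have hcos2D : Real.cos x^2 ≤ D := by
    rw [hD_def]; exact le_add_of_nonneg_right (sq_nonneg _)
  have hu2 : u^2 ≤ 1/D := by
    rw [hu_def, div_pow, div_le_div_iff₀ (by positivity) hD0]
    have h1 : (Real.sin x * Real.cos x)^2 ≤ Real.cos x^2 := by
      have hs := Real.sin_sq_le_one x
      have hc := sq_nonneg (Real.cos x)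
      calc (Real.sin x * Real.cos x)^2 = Real.sin x^2 * Real.cos x^2 := by ring
        _ ≤ 1 * Real.cos x^2 := mul_le_mul_of_nonneg_right hs hc
        _ = Real.cos x^2 := one_mul _
    have h2 : (Real.sin x * Real.cos x)^2 * D ≤ D * D :=
      mul_le_mul_of_nonneg_right (le_trans h1 hcos2D) hD0.le
    calc (Real.sin x * Real.cos x)^2 * D ≤ D * D := h2
      _ = 1 * D^2 := by ring
  have hV1 : Y * u^2 ≤ V := by
    have h1 : Y * u^2 ≤ Y * (1/D) := mul_le_mul_of_nonneg_left hu2 hY0.le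
    have h2 : Y * (1/D) ≤ V := by
      rw [hV_def, show Y*(1/D) = Y/D from by ring, div_le_div_iff₀ hD0 hD0]
      have h3 : Y ≤ Real.sinh Y * Real.cosh Y := by
        calc Y ≤ Real.sinh Y := hsinhY.le
          _ = Real.sinh Y * 1 := (mul_one _).symm
          _ ≤ Real.sinh Y * Real.cosh Y := mul_le_mul_of_nonneg_left hcosh1 hsinh_pos.le
      exact mul_le_mul_of_nonneg_right h3 hD0.le
    linarith only [h1, h2]
  have hVup : V ≤ 2/Y := by
    rw [hV_def, div_le_div_iff₀ hD0 hY0]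
    have h1 : Real.sinh Y^2 ≤ D := by
      rw [hD_def]; exact le_add_of_nonneg_left (sq_nonneg _)
    have e1 : Real.sinh Y * Real.cosh Y * Y ≤ Real.sinh Y * 2 * Real.sinh Y := by
      apply mul_le_mul (mul_le_mul_of_nonneg_left hcosh2 hsinh_pos.le) hsinhY.le hY0.le
        (by positivity)
    linarith only [e1, h1]
  have hu_abs : |u| ≤ Real.sqrt 2 / Y := by
    have h1 : u^2 ≤ 2/Y^2 := by
      have h2 : Y*u^2 ≤ 2/Y := le_trans hV1 hVup
      rw [le_div_iff₀ hY0] at h2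
      rw [le_div_iff₀ (by positivity : (0:ℝ) < Y^2)]
      linarith only [h2]
    calc |u| = Real.sqrt (u^2) := (Real.sqrt_sq_eq_abs u).symm
      _ ≤ Real.sqrt (2/Y^2) := Real.sqrt_le_sqrt h1
      _ = Real.sqrt 2 / Y := by
          rw [Real.sqrt_div (by norm_num), Real.sqrt_sq hY0.le]
  -- K
  set K : ℝ := 2*κ*(a*R)^3/(m*ω^2) with hK_def
  have hK0 : 0 < K := by rw [hK_def]; positivity
  have hK_up : K ≤ k₂/σ := by
    have h1 : (a*R)^3 ≤ (2*(a*σ))^3 := by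
      apply pow_le_pow_left₀ (by positivity)
      linarith only [mul_le_mul_of_nonneg_left hR_up ha.le]
    have h2 : K ≤ 2*κ*(2*(a*σ))^3/(m*ω^2) := by
      rw [hK_def]
      gcongr
    have h3 : 2*κ*(2*(a*σ))^3/(m*ω^2) = k₂/σ := by
      rw [hk2_def, ← hσ2]; field_simp; ring
    linarith
  -- constants for core lemma
  have hc2 : c ≤ Y / (16*K) := by
    rw [le_div_iff₀ (by positivity)]
    have h1 : c*(16*K) ≤ (cy/(16*k₂))*(16*(k₂/σ)) := by
      apply mul_le_mul hccy (by linarith) (by positivity) (by positivity)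
    have h2 : (cy/(16*k₂))*(16*(k₂/σ)) = cy/σ := by field_simp
    linarith only [h1, h2, hY_low]
  have hgω4 : g/(2*ω) ≤ 1/4 := by
    rw [div_le_div_iff₀ (by positivity) (by norm_num)]
    linarith only [hω2g]
  have hθ34 : -(3*θ) ≤ 3/4 := by linarith only [hθ_up, hgω4]
  have hθ3neg : 3*θ < 0 := by linarith
  have hcos3 : 1/2 ≤ Real.cos (3*θ) := by
    have h1 := Real.one_sub_sq_div_two_le_cos (x := 3*θ)
    have h2 : (3*θ)^2 ≤ (3/4)^2 := sq_le_sq' (by linarith only [hθ34]) (by linarith only [hθ3neg])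
    linarith only [h1, h2]
  have habs_sin : |Real.sin (3*θ)| ≤ 3*(g/(2*ω)) := by
    have h1 : |Real.sin (3*θ)| ≤ |3*θ| := (Real.abs_sin_lt_abs (by linarith only [hθ3neg])).le
    have h2 : |3*θ| = -(3*θ) := abs_of_neg hθ3neg
    rw [h2] at h1
    linarith only [h1, hθ_up]
  have hinvY : Real.sqrt 2 / Y ≤ Real.sqrt 2 * σ / cy := by
    have h0 : 0 < cy/σ := by positivity
    have h1 : Real.sqrt 2 / Y ≤ Real.sqrt 2 / (cy/σ) :=
      div_le_div_of_nonneg_left (Real.sqrt_nonneg 2) h0 hY_low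
    have h2 : Real.sqrt 2 / (cy/σ) = Real.sqrt 2 * σ / cy := by field_simp
    linarith only [h1, h2]
  have hsqrt2 : Real.sqrt 2 ≤ 3/2 := by
    rw [show (3/2:ℝ) = Real.sqrt ((3/2)^2) from (Real.sqrt_sq (by norm_num)).symm]
    exact Real.sqrt_le_sqrt (by norm_num)
  have herr : K * (Real.sqrt 2 / Y) * |Real.sin (3*θ)| ≤ c/4 := by
    have h1 : K * (Real.sqrt 2 / Y) * |Real.sin (3*θ)|
        ≤ (k₂/σ) * (Real.sqrt 2 * σ / cy) * (3*(g/(2*ω))) := by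
      apply mul_le_mul (mul_le_mul hK_up hinvY (by positivity) (by positivity)) habs_sin
        (abs_nonneg _) (by positivity)

    have h2 : (k₂/σ) * (Real.sqrt 2 * σ / cy) * (3*(g/(2*ω)))
        = Real.sqrt 2 * (3/2) * (k₂*g/(cy*ω)) := by
      field_simp
    have h3 : Real.sqrt 2 * (3/2) * (k₂*g/(cy*ω)) ≤ 3 * (k₂*g/(cy*ω)) := by
      have hX : (0:ℝ) ≤ k₂*g/(cy*ω) := by positivity
      have h3a := mul_le_mul_of_nonneg_right
        (mul_le_mul_of_nonneg_right hsqrt2 (by norm_num : (0:ℝ) ≤ 3/2)) hX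
      linarith only [h3a, hX]
    have h4 : 3 * (k₂*g/(cy*ω)) ≤ c/4 := by
      have h5 : 12*k₂*g ≤ ω*(cy*c) := (div_le_iff₀ (by positivity)).1 hωerr
      rw [show 3*(k₂*g/(cy*ω)) = (3*(k₂*g))/(cy*ω) from by ring,
        div_le_div_iff₀ (by positivity) (by norm_num : (0:ℝ) < 4)]
      linarith only [h5]
    linarith only [h1, h2, h3, h4]
  -- rewrite the target
  have h3exp : Complex.exp ((θ:ℝ) * Complex.I)^(3:ℕ)
      = Complex.exp (((3*θ : ℝ) : ℂ) * Complex.I) := by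
    rw [← Complex.exp_nat_mul]
    congr 1
    push_cast
    ring
  have hαcube : (alphaWN β κ γ ω)^3
      = (((a*R)^3 : ℝ):ℂ) * Complex.exp (((3*θ : ℝ) : ℂ) * Complex.I) := by
    rw [hαpolar, mul_pow, h3exp]
    norm_cast
  have hKc : ((K:ℝ):ℂ) = 2*(κ:ℂ)/((m:ℂ)*(ω:ℂ)^2) * (((a*R)^3 : ℝ):ℂ) := by
    rw [hK_def]
    push_cast
    field_simp
  have hQ : 1 + (2 * (κ:ℂ) / ((m:ℂ) * (ω:ℂ) ^ 2)) * (alphaWN β κ γ ω) ^ 3 *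
        Complex.tan (alphaWN β κ γ ω)
      = 1 + ((K:ℝ):ℂ) * Complex.exp (((3*θ : ℝ) : ℂ) * Complex.I) *
        Complex.tan (alphaWN β κ γ ω) := by
    rw [hαcube, hKc]
    ring
  rw [hQ]
  exact core_ineq K (3*θ) u V Y c (Complex.tan (alphaWN β κ γ ω)) hK0 hY0 htre htim hV0 hV1
    hu_abs hc hc14 hc2 hcos3 herr
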